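/- Let d, r ≥ 1 and let Γ be a ℂ-linear subspace of R_r having 0 as its only common zero. Then R is generated as a module over the ℂ-subalgebra Algebra.adjoin ℂ Γ of R by the polynomials of degree at most (r−1)·d; in particular, R is a finitely generated module over Algebra.adjoin ℂ Γ. -/

import Mathlib

open MvPolynomial

open Submodule

section AssFinite

variable {R : Type*} [CommRing R] [IsNoetherianRing R]

theorem isAssociatedPrime_or {M : Type*} [AddCommGroup M] [Module R M] (N : Submodule R M)
    {p : Ideal R} (hp : IsAssociatedPrime p M) :
    IsAssociatedPrime p N ∨ IsAssociatedPrime p (M ⧸ N) := by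
  obtain ⟨hprime, x, hx⟩ := isAssociatedPrime_iff.mp hp
  by_cases hcap : ∀ y ∈ (R ∙ x) ⊓ N, y = (0 : M)
  · right
    refine isAssociatedPrime_iff.mpr ⟨hprime, Submodule.Quotient.mk x, ?_⟩
    ext a
    rw [hx, Submodule.mem_colon_singleton, Submodule.mem_bot,
      Submodule.mem_colon_singleton, Submodule.mem_bot]
    constructor
    · intro h
      rw [← Submodule.Quotient.mk_smul, h, Submodule.Quotient.mk_zero]
    · intro h
      rw [← Submodule.Quotient.mk_smul, Submodule.Quotient.mk_eq_zero] at h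
      exact hcap _ ⟨Submodule.smul_mem _ a (Submodule.mem_span_singleton_self x), h⟩
  · left
    push_neg at hcap
    obtain ⟨y, ⟨hy1, hy2⟩, hy0⟩ := hcap
    obtain ⟨b, rfl⟩ := Submodule.mem_span_singleton.mp hy1
    have hbp : b ∉ p := by
      intro hb
      apply hy0
      rw [hx, Submodule.mem_colon_singleton, Submodule.mem_bot] at hb
      exact hb
    refine isAssociatedPrime_iff.mpr ⟨hprime, ⟨b • x, hy2⟩, ?_⟩
    ext a
    rw [hx, Submodule.mem_colon_singleton, Submodule.mem_bot,
      Submodule.mem_colon_singleton, Submodule.mem_bot]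
    constructor
    · intro h
      ext
      simp only [SetLike.mk_smul_mk, ZeroMemClass.coe_zero]
      rw [smul_comm, h, smul_zero]
    · intro h
      have h2 : (a * b) • x = 0 := by
        have := congrArg (Subtype.val) h
        simpa [mul_smul, smul_comm a b x] using this
      have hab : a * b ∈ p := by
        rw [hx, Submodule.mem_colon_singleton, Submodule.mem_bot]; exact h2
      rcases hprime.mem_or_mem hab with h' | h'
      · rw [hx, Submodule.mem_colon_singleton, Submodule.mem_bot] at h'; exact h'
      · exact absurd h' hbp

theorem associatedPrimes_finite (M : Type*) [AddCommGroup M] [Module R M] [Module.Finite R M] :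
    (associatedPrimes R M).Finite := by
  have hNoeth : IsNoetherian R M := isNoetherian_of_isNoetherianRing_of_finite R M
  obtain ⟨N, hNmem, hNmax⟩ := (set_has_maximal_iff_noetherian.mpr hNoeth)
    {N : Submodule R M | (associatedPrimes R N).Finite}
    ⟨⊥, by
      show (associatedPrimes R (↥(⊥ : Submodule R M))).Finite
      rw [associatedPrimes.eq_empty_of_subsingleton]
      exact Set.finite_empty⟩
  have hNtop : N = ⊤ := by
    by_contra hne
    have hlt : N < ⊤ := lt_top_iff_ne_top.mpr hne
    have : Nontrivial (M ⧸ N) := Submodule.Quotient.nontrivial_iff.mpr hne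
    obtain ⟨p, hp⟩ := associatedPrimes.nonempty R (M ⧸ N)
    obtain ⟨hprime, xbar, hx⟩ := isAssociatedPrime_iff.mp hp
    obtain ⟨x, rfl⟩ := Submodule.Quotient.mk_surjective N xbar
    have hxbar : Submodule.Quotient.mk x ≠ (0 : M ⧸ N) := by
      intro h0
      apply hprime.ne_top
      rw [hx, h0, Submodule.colon_singleton_zero]
    have hxN : x ∉ N := fun h => hxbar ((Submodule.Quotient.mk_eq_zero N).mpr h)
    set N' : Submodule R M := N ⊔ R ∙ x with hN'def
    have hNN' : N ≤ N' := le_sup_left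
    have hxN' : x ∈ N' :=
      Submodule.mem_sup_right (Submodule.mem_span_singleton_self x)
    set N₀ : Submodule R ↥N' := N.comap N'.subtype with hN₀def
    set ψ : R →ₗ[R] ↥N' := LinearMap.toSpanSingleton R ↥N' ⟨x, hxN'⟩ with hψdef
    set φ : R →ₗ[R] (↥N' ⧸ N₀) := N₀.mkQ.comp ψ with hφdef
    have hsurj : Function.Surjective φ := by
      intro z
      obtain ⟨⟨y, hy⟩, rfl⟩ := N₀.mkQ_surjective z
      rw [hN'def] at hy
      obtain ⟨n, hn, w, hw, rfl⟩ := Submodule.mem_sup.mp hy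
      obtain ⟨c, rfl⟩ := Submodule.mem_span_singleton.mp hw
      refine ⟨c, ?_⟩
      rw [hφdef]
      simp only [LinearMap.comp_apply, Submodule.mkQ_apply]
      rw [Submodule.Quotient.eq]
      have : ψ c = ⟨c • x, Submodule.smul_mem _ _ hxN'⟩ := by
        rw [hψdef]; ext; simp [LinearMap.toSpanSingleton_apply]
      rw [this]
      show (⟨c • x, _⟩ - ⟨n + c • x, hy⟩ : ↥N') ∈ N₀
      have : (⟨c • x, Submodule.smul_mem _ _ hxN'⟩ - ⟨n + c • x, hy⟩ : ↥N') =
          ⟨-n, by simpa using Submodule.neg_mem _ (hNN' hn)⟩ := by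
        ext; simp
      rw [this]
      exact Submodule.neg_mem _ hn
    have hker : LinearMap.ker φ = p := by
      ext a
      rw [LinearMap.mem_ker, hφdef]
      simp only [LinearMap.comp_apply, Submodule.mkQ_apply]
      rw [Submodule.Quotient.mk_eq_zero]
      have hψa : ψ a = ⟨a • x, Submodule.smul_mem _ _ hxN'⟩ := by
        rw [hψdef]; ext; simp [LinearMap.toSpanSingleton_apply]
      rw [hψa]
      show a • x ∈ N ↔ a ∈ p
      rw [hx, Submodule.mem_colon_singleton, Submodule.mem_bot, ← Submodule.Quotient.mk_smul,
        Submodule.Quotient.mk_eq_zero]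
    have e := φ.quotKerEquivOfSurjective hsurj
    rw [hker] at e
    have hAssQ : associatedPrimes R (↥N' ⧸ N₀) = {p} := by
      rw [← LinearEquiv.AssociatedPrimes.eq e]
      rw [associatedPrimes.eq_singleton_of_isPrimary hprime.isPrimary, hprime.radical]
    have hfin' : (associatedPrimes R ↥N').Finite := by
      apply Set.Finite.subset (hNmem.union (Set.finite_singleton p))
      intro q hq
      rcases isAssociatedPrime_or N₀ hq with h | h
      · left
        rw [← LinearEquiv.AssociatedPrimes.eq (Submodule.comapSubtypeEquivOfLe hNN')]
        exact h
      · right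
        rw [← hAssQ]
        exact h
    have hlt' : N < N' := lt_of_le_of_ne hNN' (fun h => hxN (h ▸ hxN'))
    exact (hNmax N' hfin') hlt'
  rw [← LinearEquiv.AssociatedPrimes.eq (Submodule.topEquiv (R := R) (M := M))]
  rw [hNtop] at hNmem
  exact hNmem

end AssFinite


section RegSeq

variable {R : Type*} [CommRing R]

/-- `a` is a nonzerodivisor modulo the ideal `K`. -/
def RegMod (a : R) (K : Ideal R) : Prop := ∀ u : R, a * u ∈ K → u ∈ K

/-- regular sequence modulo `K`. -/
def RegSeq : List R → Ideal R → Prop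
  | [], _ => True
  | a :: l, K => RegMod a K ∧ RegSeq l (K ⊔ Ideal.span {a})

/-- ideal generated by the members of a list -/
def spanl (l : List R) : Ideal R := Ideal.span {x | x ∈ l}

@[simp] theorem spanl_nil : spanl ([] : List R) = ⊥ := by
  show Ideal.span _ = ⊥
  convert Ideal.span_empty
  ext x; simp

theorem spanl_cons (a : R) (l : List R) : spanl (a :: l) = Ideal.span {a} ⊔ spanl l := by
  have : {x | x ∈ a :: l} = insert a {x | x ∈ l} := by
    ext y; simp [List.mem_cons]
  rw [spanl, this, Ideal.span_insert, spanl]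

theorem spanl_append_singleton (l : List R) (b : R) :
    spanl (l ++ [b]) = spanl l ⊔ Ideal.span {b} := by
  induction l with
  | nil => simp [spanl_cons]
  | cons a t ih => rw [List.cons_append, spanl_cons, ih, spanl_cons, sup_assoc]

theorem regMod_of_mem_top {a : R} {K : Ideal R} (h : K = ⊤) : RegMod a K := by
  intro u _; rw [h]; trivial

theorem RegSeq.append_singleton {l : List R} {b : R} {K : Ideal R}
    (h : RegSeq l K) (hb : RegMod b (K ⊔ spanl l)) : RegSeq (l ++ [b]) K := by
  induction l generalizing K with
  | nil => exact ⟨by simpa using hb, trivial⟩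
  | cons a t ih =>
    obtain ⟨h1, h2⟩ := h
    refine ⟨h1, ih h2 ?_⟩
    rw [spanl_cons, ← sup_assoc] at hb
    exact hb

theorem RegSeq.tail_ideal {l : List R} {K : Ideal R} (h : RegSeq l K) :
    ∀ i, (hi : i < l.length) → RegMod (l.get ⟨i, hi⟩) (K ⊔ spanl (l.take i)) := by
  induction l generalizing K with
  | nil => intro i hi; simp at hi
  | cons a t ih =>
    obtain ⟨h1, h2⟩ := h
    intro i hi
    cases i with
    | zero => simpa using h1
    | succ j =>
      have hj : j < t.length := by simpa using hi
      have := ih h2 j hj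
      simp only [List.take_succ_cons, spanl_cons, List.get_cons_succ]
      rw [← sup_assoc]
      exact this

theorem RegSeq.take {l : List R} {K : Ideal R} (h : RegSeq l K) (t : ℕ) :
    RegSeq (l.take t) K := by
  induction l generalizing K t with
  | nil => rw [List.take_nil]; trivial
  | cons a tl ih =>
    cases t with
    | zero => trivial
    | succ s => exact ⟨h.1, ih h.2 s⟩

/-- transposition lemma -/
theorem regMod_swap {a b : R} {K : Ideal R} (ha : RegMod a K)
    (hb : RegMod b (K ⊔ Ideal.span {a})) : RegMod a (K ⊔ Ideal.span {b}) := by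
  intro u hu
  obtain ⟨i, hi, w, hw, huw⟩ := Submodule.mem_sup.mp hu
  obtain ⟨v, rfl⟩ := Ideal.mem_span_singleton'.mp hw
  -- a * u = i + v * b
  have hvb : b * v ∈ K ⊔ Ideal.span {a} := by
    have : b * v = a * u - i := by rw [← huw]; ring
    rw [this]
    refine Submodule.sub_mem _ ?_ (Submodule.mem_sup_left hi)
    exact Submodule.mem_sup_right (Ideal.mem_span_singleton'.mpr ⟨u, by ring⟩)
  have hv : v ∈ K ⊔ Ideal.span {a} := hb v hvb
  obtain ⟨i', hi', w', hw', hvw⟩ := Submodule.mem_sup.mp hv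
  obtain ⟨c, rfl⟩ := Ideal.mem_span_singleton'.mp hw'
  -- v = i' + c * a
  have key : a * (u - b * c) ∈ K := by
    have : a * (u - b * c) = i + i' * b := by
      have h1 : a * u = i + v * b := huw ▸ rfl
      rw [← hvw] at h1
      calc a * (u - b * c) = a * u - (c * a) * b := by ring
        _ = i + i' * b := by rw [h1]; ring
    rw [this]
    exact Submodule.add_mem _ hi (Ideal.mul_mem_right _ _ hi')
  have := ha _ key
  have : u - b * c + b * c ∈ K ⊔ Ideal.span {b} := by
    refine Submodule.add_mem _ (Submodule.mem_sup_left this) ?_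
    exact Submodule.mem_sup_right (Ideal.mem_span_singleton'.mpr ⟨c, by ring⟩)
  simpa using this

/-- the elementary "depth ≥ 2" lemma -/
theorem star_lemma {g h₁ h₂ y : R} {K : Ideal R} (hg : RegMod g K) (hh₁ : RegMod h₁ K)
    (hh₂ : RegMod h₂ (K ⊔ Ideal.span {h₁}))
    (hy1 : h₁ * y ∈ K ⊔ Ideal.span {g}) (hy2 : h₂ * y ∈ K ⊔ Ideal.span {g}) :
    y ∈ K ⊔ Ideal.span {g} := by
  obtain ⟨i₁, hi₁, w₁, hw₁, h1⟩ := Submodule.mem_sup.mp hy1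
  obtain ⟨m₁, rfl⟩ := Ideal.mem_span_singleton'.mp hw₁
  obtain ⟨i₂, hi₂, w₂, hw₂, h2⟩ := Submodule.mem_sup.mp hy2
  obtain ⟨m₂, rfl⟩ := Ideal.mem_span_singleton'.mp hw₂
  -- h₁ y = i₁ + m₁ g, h₂ y = i₂ + m₂ g
  have hg0 : g * (h₂ * m₁ - h₁ * m₂) ∈ K := by
    have : g * (h₂ * m₁ - h₁ * m₂) = h₂ * (i₁ + m₁ * g) - h₁ * (i₂ + m₂ * g)
        - (h₂ * i₁ - h₁ * i₂) := by ring
    rw [this, h1, h2]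
    have : h₂ * (h₁ * y) - h₁ * (h₂ * y) - (h₂ * i₁ - h₁ * i₂)
        = -(h₂ * i₁ - h₁ * i₂) := by ring
    rw [this]
    exact Submodule.neg_mem _ (Submodule.sub_mem _
      (Ideal.mul_mem_left _ _ hi₁) (Ideal.mul_mem_left _ _ hi₂))
  have hsub : h₂ * m₁ - h₁ * m₂ ∈ K := hg _ hg0
  have hm₁ : h₂ * m₁ ∈ K ⊔ Ideal.span {h₁} := by
    have : h₂ * m₁ = (h₂ * m₁ - h₁ * m₂) + m₂ * h₁ := by ring
    rw [this]
    exact Submodule.add_mem _ (Submodule.mem_sup_left hsub)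
      (Submodule.mem_sup_right (Ideal.mem_span_singleton'.mpr ⟨m₂, rfl⟩))
  have hm₁' : m₁ ∈ K ⊔ Ideal.span {h₁} := hh₂ _ hm₁
  obtain ⟨i₃, hi₃, w₃, hw₃, h3⟩ := Submodule.mem_sup.mp hm₁'
  obtain ⟨u, rfl⟩ := Ideal.mem_span_singleton'.mp hw₃
  -- m₁ = i₃ + u h₁
  have hy' : h₁ * (y - g * u) ∈ K := by
    have e : h₁ * (y - g * u) = i₁ + i₃ * g := by
      have h1' : h₁ * y = i₁ + m₁ * g := h1.symm
      rw [mul_sub, h1', ← h3]; ring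
    rw [e]
    exact Submodule.add_mem _ hi₁ (Ideal.mul_mem_right _ _ hi₃)
  have hyK : y - g * u ∈ K := hh₁ _ hy'
  have : y = (y - g * u) + g * u := by ring
  rw [this]
  exact Submodule.add_mem _ (Submodule.mem_sup_left hyK)
    (Submodule.mem_sup_right (Ideal.mem_span_singleton'.mpr ⟨u, by ring⟩))

end RegSeq




section DL

variable {R : Type*} [CommRing R] [IsNoetherianRing R]

theorem regMod_of_forall_ass {a : R} {K : Ideal R}
    (h : ∀ p ∈ associatedPrimes R (R ⧸ K), a ∉ p) : RegMod a K := by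
  intro u hu
  by_contra huK
  have hx : (Submodule.Quotient.mk u : R ⧸ K) ≠ 0 := by
    rwa [ne_eq, Submodule.Quotient.mk_eq_zero]
  obtain ⟨p, hp, hle⟩ := exists_le_isAssociatedPrime_of_isNoetherianRing R
      (Submodule.Quotient.mk u : R ⧸ K) hx
  refine h p hp (hle ?_)
  rw [Submodule.mem_colon_singleton, Submodule.mem_bot, ← Submodule.Quotient.mk_smul,
    smul_eq_mul, Submodule.Quotient.mk_eq_zero]
  exact hu

theorem not_ass_of_regMod_mem {b : R} {K : Ideal R} {p : Ideal R}
    (hb : RegMod b K) (hbp : b ∈ p) (hp : IsAssociatedPrime p (R ⧸ K)) : False := by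
  obtain ⟨hprime, xbar, hx⟩ := isAssociatedPrime_iff.mp hp
  obtain ⟨x, rfl⟩ := Submodule.Quotient.mk_surjective _ xbar
  have hx0 : (Submodule.Quotient.mk x : R ⧸ K) ≠ 0 := by
    intro h0
    apply hprime.ne_top
    rw [hx, h0, Submodule.colon_singleton_zero]
  have hbx : b • (Submodule.Quotient.mk x : R ⧸ K) = 0 := by
    rw [hx, Submodule.mem_colon_singleton, Submodule.mem_bot] at hbp; exact hbp
  rw [← Submodule.Quotient.mk_smul, smul_eq_mul, Submodule.Quotient.mk_eq_zero] at hbx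
  exact hx0 ((Submodule.Quotient.mk_eq_zero _).mpr (hb _ hbx))

theorem not_ass_sup_of_star {g h₁ h₂ : R} {K 𝔪 : Ideal R} (hg : RegMod g K)
    (hh₁ : RegMod h₁ K) (hh₂ : RegMod h₂ (K ⊔ Ideal.span {h₁}))
    (h1m : h₁ ∈ 𝔪) (h2m : h₂ ∈ 𝔪)
    (hass : IsAssociatedPrime 𝔪 (R ⧸ (K ⊔ Ideal.span {g}))) : False := by
  obtain ⟨hprime, xbar, hx⟩ := isAssociatedPrime_iff.mp hass
  obtain ⟨y, rfl⟩ := Submodule.Quotient.mk_surjective _ xbar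
  have hy0 : (Submodule.Quotient.mk y : R ⧸ (K ⊔ Ideal.span {g})) ≠ 0 := by
    intro h0
    apply hprime.ne_top
    rw [hx, h0, Submodule.colon_singleton_zero]
  have key : ∀ b : R, b ∈ 𝔪 → b * y ∈ K ⊔ Ideal.span {g} := by
    intro b hb
    rw [hx, Submodule.mem_colon_singleton, Submodule.mem_bot] at hb
    rwa [← Submodule.Quotient.mk_smul, smul_eq_mul, Submodule.Quotient.mk_eq_zero] at hb
  exact hy0 ((Submodule.Quotient.mk_eq_zero _).mpr
    (star_lemma hg hh₁ hh₂ (key h₁ h1m) (key h₂ h2m)))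

theorem exists_mem_maxIdeal_notMem {𝔪 : Ideal R} (h𝔪 : 𝔪.IsMaximal)
    (T : Set (Ideal R)) (hfin : T.Finite) (hprime : ∀ p ∈ T, p.IsPrime)
    (hne : 𝔪 ∉ T) : ∃ a ∈ 𝔪, ∀ p ∈ T, a ∉ p := by
  by_contra hcon
  push_neg at hcon
  have hsub : (𝔪 : Set R) ⊆ ⋃ p ∈ (↑hfin.toFinset : Set (Ideal R)), (p : Set R) := by
    intro a ha
    obtain ⟨p, hpT, hap⟩ := hcon a ha
    exact Set.mem_biUnion (by simpa using hfin.mem_toFinset.mpr hpT) hap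
  have hp' : ∀ i ∈ hfin.toFinset, i ≠ (⊥ : Ideal R) → i ≠ (⊥ : Ideal R) → i.IsPrime :=
    fun i hi _ _ => hprime i (hfin.mem_toFinset.mp hi)
  obtain ⟨p, hps, hle⟩ := (Ideal.subset_union_prime (⊥ : Ideal R) (⊥ : Ideal R) hp').mp hsub
  have hpT : p ∈ T := hfin.mem_toFinset.mp hps
  have : 𝔪 = p := h𝔪.eq_of_le (hprime p hpT).ne_top hle
  exact hne (this ▸ hpT)

theorem regSeq_cons_of_regMod_prefix {c : R} : ∀ (l : List R) (K : Ideal R),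
    RegSeq l K → (∀ i, i ≤ l.length → RegMod c (K ⊔ spanl (l.take i))) →
    RegSeq (c :: l) K := by
  intro l
  induction l with
  | nil =>
    intro K _ hc
    refine ⟨?_, trivial⟩
    have := hc 0 (by simp)
    simpa using this
  | cons a t ih =>
    intro K h hc
    have hcK : RegMod c K := by simpa using hc 0 (by simp)
    have hcKa : RegMod c (K ⊔ Ideal.span {a}) := by
      have := hc 1 (by simp)
      simpa [spanl_cons] using this
    have hrec : RegSeq (c :: t) (K ⊔ Ideal.span {a}) := by
      refine ih (K ⊔ Ideal.span {a}) h.2 ?_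
      intro i hi
      have := hc (i + 1) (by simpa using hi)
      rw [List.take_succ_cons, spanl_cons, ← sup_assoc] at this
      exact this
    refine ⟨hcK, regMod_swap h.1 hcKa, ?_⟩
    have := hrec.2
    rwa [sup_right_comm] at this

theorem dl_lemma {𝔪 : Ideal R} (h𝔪 : 𝔪.IsMaximal) :
    ∀ (s : ℕ) (K : Ideal R) (g : R) (h : List R), h.length = s + 1 →
    (∀ x ∈ h, x ∈ 𝔪) → RegMod g K → RegSeq h K →
    ∃ k : List R, k.length = s ∧ (∀ x ∈ k, x ∈ 𝔪) ∧ RegSeq (g :: k) K := by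
  intro s
  induction s with
  | zero =>
    intro K g h _ _ hg _
    exact ⟨[], rfl, by simp, hg, trivial⟩
  | succ s ih =>
    intro K g h hlen hmem hg hseq
    match h, hlen with
    | h₁ :: h₂ :: t', hlen =>
    have hlen' : t'.length = s := by simpa using hlen
    set hfull : List R := h₁ :: h₂ :: t' with hfulldef
    have hfin_mod : ∀ K' : Ideal R, Module.Finite R (R ⧸ K') := fun K' =>
      Module.Finite.of_surjective K'.mkQ (Submodule.mkQ_surjective K')
    have hAfin : ∀ K' : Ideal R, (associatedPrimes R (R ⧸ K')).Finite := fun K' => by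
      have := hfin_mod K'
      exact associatedPrimes_finite (R ⧸ K')
    set T : Set (Ideal R) := (associatedPrimes R (R ⧸ (K ⊔ Ideal.span {g}))) ∪
      ⋃ j ∈ Finset.range (s + 2),
        associatedPrimes R (R ⧸ (K ⊔ spanl (hfull.take j))) with hTdef
    have hTfin : T.Finite := by
      apply Set.Finite.union (hAfin _)
      apply Set.Finite.biUnion (Finset.range (s+2)).finite_toSet
      intro j _
      exact hAfin _
    have hTprime : ∀ p ∈ T, p.IsPrime := by
      intro p hp
      rcases hp with hp | hp
      · exact hp.isPrime
      · simp only [Set.mem_iUnion] at hp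
        obtain ⟨j, _, hp⟩ := hp
        exact hp.isPrime
    have h𝔪T : 𝔪 ∉ T := by
      intro hmT
      rcases hmT with hmT | hmT
      · exact not_ass_sup_of_star hg hseq.1 hseq.2.1
          (hmem h₁ (by rw [hfulldef]; simp)) (hmem h₂ (by rw [hfulldef]; simp)) hmT
      · simp only [Set.mem_iUnion] at hmT
        obtain ⟨j, hj, hmT⟩ := hmT
        have hjlt : j < hfull.length := by
          simp only [hfulldef, List.length_cons, hlen']
          have := Finset.mem_range.mp hj
          omega
        refine not_ass_of_regMod_mem (hseq.tail_ideal j hjlt) ?_ hmT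
        exact hmem _ (List.get_mem hfull ⟨j, hjlt⟩)
    obtain ⟨k₁, hk₁m, hk₁T⟩ := exists_mem_maxIdeal_notMem h𝔪 T hTfin hTprime h𝔪T
    have regc_g : RegMod k₁ (K ⊔ Ideal.span {g}) := by
      apply regMod_of_forall_ass
      intro p hp
      exact hk₁T p (Or.inl hp)
    have regc_j : ∀ j, j ≤ s + 1 → RegMod k₁ (K ⊔ spanl (hfull.take j)) := by
      intro j hj
      apply regMod_of_forall_ass
      intro p hp
      refine hk₁T p (Or.inr ?_)
      simp only [Set.mem_iUnion]
      exact ⟨j, Finset.mem_range.mpr (by omega), hp⟩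
    set htr : List R := hfull.take (s + 1) with htrdef
    have htrlen : htr.length = s + 1 := by
      simp [htrdef, hfulldef, hlen']
    have htrseq : RegSeq htr K := hseq.take (s + 1)
    have hkfront : RegSeq (k₁ :: htr) K := by
      apply regSeq_cons_of_regMod_prefix htr K htrseq
      intro i hi
      have : htr.take i = hfull.take i := by
        rw [htrdef, List.take_take]
        congr 1
        omega
      rw [this]
      exact regc_j i (by omega)
    have hgswap : RegMod g (K ⊔ Ideal.span {k₁}) := regMod_swap hg regc_g
    obtain ⟨k', hk'len, hk'mem, hk'seq⟩ := ih (K ⊔ Ideal.span {k₁}) g htr htrlen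
      (fun x hx => hmem x (List.take_subset _ _ hx)) hgswap hkfront.2
    refine ⟨k₁ :: k', by simp [hk'len], ?_, hg, regc_g, ?_⟩
    · intro x hx
      rcases List.mem_cons.mp hx with rfl | hx
      · exact hk₁m
      · exact hk'mem x hx
    · have := hk'seq.2
      rwa [sup_right_comm] at this

end DL


open MvPolynomial



section Poly

variable {d : ℕ}

abbrev Rd (d : ℕ) := MvPolynomial (Fin d) ℂ

noncomputable def mIdeal (d : ℕ) : Ideal (Rd d) := vanishingIdeal ℂ ({0} : Set (Fin d → ℂ))

theorem mIdeal_isMaximal (d : ℕ) : (mIdeal d).IsMaximal := by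
  rw [mIdeal]; infer_instance

theorem X_mem_mIdeal (i : Fin d) : (X i : Rd d) ∈ mIdeal d := by
  rw [mIdeal, mem_vanishingIdeal_iff]
  rintro x rfl
  simp

theorem homog_mem_mIdeal {r : ℕ} (hr : 1 ≤ r) {g : Rd d} (hg : g.IsHomogeneous r) :
    g ∈ mIdeal d := by
  rw [mIdeal, mem_vanishingIdeal_iff]
  rintro x rfl
  show (eval (0 : Fin d → ℂ)) g = 0
  rw [MvPolynomial.eval_zero]
  have h0 : (0 : (Fin d) →₀ ℕ).degree ≠ r := by simp; omega
  simpa [MvPolynomial.constantCoeff_eq] using hg.coeff_eq_zero h0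

theorem regseq_X_aux : ∀ (l : List (Fin d)) (s : Set (Fin d)), l.Nodup →
    (∀ i ∈ l, i ∉ s) → RegSeq (l.map (X : Fin d → Rd d)) (Ideal.span ((X : Fin d → Rd d) '' s)) := by
  intro l
  induction l with
  | nil => intro s _ _; trivial
  | cons a t ih =>
    intro s hnd hdisj
    constructor
    · intro u hu
      rw [mem_ideal_span_X_image] at hu ⊢
      intro m hm
      have hm' : Finsupp.single a 1 + m ∈ (X a * u).support := by
        rw [mem_support_iff, coeff_X_mul]
        exact mem_support_iff.mp hm
      obtain ⟨i, his, hine⟩ := hu _ hm'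
      refine ⟨i, his, ?_⟩
      have hia : i ≠ a := fun h => hdisj a (by simp) (h ▸ his)
      simpa [Finsupp.single_apply, hia.symm] using hine
    · have himg : Ideal.span ((X : Fin d → Rd d) '' s) ⊔ Ideal.span {X a}
          = Ideal.span ((X : Fin d → Rd d) '' (insert a s)) := by
        rw [Set.image_insert_eq, Ideal.span_insert, sup_comm]
      rw [himg]
      refine ih (insert a s) hnd.of_cons ?_
      intro i hit
      rw [Set.mem_insert_iff]
      push_neg
      constructor
      · intro h; exact (List.nodup_cons.mp hnd).1 (h ▸ hit)
      · exact hdisj i (by simp [hit])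
    
theorem regseq_X (d : ℕ) :
    RegSeq ((List.finRange d).map (X : Fin d → Rd d)) (⊥ : Ideal (Rd d)) := by
  have := regseq_X_aux (d := d) (List.finRange d) ∅ (List.nodup_finRange d) (by simp)
  simpa using this

theorem prime_eq_mIdeal {r : ℕ} (Γ : Submodule ℂ (Rd d))
    (hΓ0 : ∀ x : Fin d → ℂ, (∀ g ∈ Γ, eval x g = 0) → x = 0)
    {p : Ideal (Rd d)} (hp : p.IsPrime) (hsub : (Γ : Set (Rd d)) ⊆ p) :
    p = mIdeal d := by
  have hzl : MvPolynomial.zeroLocus ℂ p ⊆ {0} := by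
    intro x hx
    have hz := MvPolynomial.mem_zeroLocus_iff.mp hx
    exact hΓ0 x (fun g hg => hz g (hsub hg))
  have hle : mIdeal d ≤ p := by
    calc mIdeal d = vanishingIdeal ℂ {0} := rfl
      _ ≤ vanishingIdeal ℂ (MvPolynomial.zeroLocus ℂ p) := vanishingIdeal_anti_mono hzl
      _ = p.radical := vanishingIdeal_zeroLocus_eq_radical p
      _ = p := hp.radical
  exact ((mIdeal_isMaximal d).eq_of_le hp.ne_top hle).symm

theorem exists_gamma_regMod {r : ℕ} (Γ : Submodule ℂ (Rd d))
    (hΓ0 : ∀ x : Fin d → ℂ, (∀ g ∈ Γ, eval x g = 0) → x = 0) (K : Ideal (Rd d))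
    (hbreg : ∃ b ∈ mIdeal d, RegMod b K) : ∃ g ∈ Γ, RegMod g K := by
  classical
  obtain ⟨b, hbm, hb⟩ := hbreg
  have hfinmod : Module.Finite (Rd d) (Rd d ⧸ K) :=
    Module.Finite.of_surjective K.mkQ (Submodule.mkQ_surjective K)
  have hTfin : (associatedPrimes (Rd d) (Rd d ⧸ K)).Finite := associatedPrimes_finite _
  set S : Finset (Subspace ℂ ↥Γ) := hTfin.toFinset.image
    (fun p => Submodule.comap Γ.subtype (p.restrictScalars ℂ)) with hSdef
  have hStop : ⊤ ∉ S := by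
    intro htop
    rw [hSdef, Finset.mem_image] at htop
    obtain ⟨p, hpS, hptop⟩ := htop
    have hpT := hTfin.mem_toFinset.mp hpS
    have hsub : (Γ : Set (Rd d)) ⊆ p := by
      intro γ hγ
      have : (⟨γ, hγ⟩ : ↥Γ) ∈ Submodule.comap Γ.subtype (p.restrictScalars ℂ) := by
        rw [hptop]; trivial
      simpa using this
    have hpm : p = mIdeal d := prime_eq_mIdeal (r := r) Γ hΓ0 hpT.isPrime hsub
    exact not_ass_of_regMod_mem hb (hpm ▸ hbm) hpT
  have hne := Subspace.biUnion_ne_univ_of_top_notMem hStop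
  obtain ⟨γ, hγ⟩ := Set.ne_univ_iff_exists_notMem _ |>.mp hne
  refine ⟨(γ : Rd d), γ.2, ?_⟩
  apply regMod_of_forall_ass
  intro p hp hmem
  apply hγ
  have hmemS : (Submodule.comap Γ.subtype (p.restrictScalars ℂ)) ∈ S := by
    rw [hSdef, Finset.mem_image]
    exact ⟨p, hTfin.mem_toFinset.mpr hp, rfl⟩
  apply Set.mem_biUnion hmemS
  show γ ∈ Submodule.comap Γ.subtype (p.restrictScalars ℂ)
  simpa using hmem

theorem exists_regseq_gamma {r : ℕ} (hd : 1 ≤ d) (hr : 1 ≤ r) (Γ : Submodule ℂ (Rd d))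
    (hΓ0 : ∀ x : Fin d → ℂ, (∀ g ∈ Γ, eval x g = 0) → x = 0) :
    ∃ gl : List (Rd d), gl.length = d ∧ (∀ x ∈ gl, x ∈ Γ) ∧ RegSeq gl ⊥ := by
  suffices H : ∀ t, t ≤ d → ∃ gl aux : List (Rd d), gl.length = t ∧ (∀ x ∈ gl, x ∈ Γ) ∧
      RegSeq gl ⊥ ∧ aux.length = d - t ∧ (∀ x ∈ aux, x ∈ mIdeal d) ∧ RegSeq aux (spanl gl) by
    obtain ⟨gl, aux, h1, h2, h3, _⟩ := H d le_rfl
    exact ⟨gl, h1, h2, h3⟩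
  intro t
  induction t with
  | zero =>
    intro _
    refine ⟨[], (List.finRange d).map X, rfl, by simp, trivial, by simp, ?_, ?_⟩
    · intro x hx
      rw [List.mem_map] at hx
      obtain ⟨i, _, rfl⟩ := hx
      exact X_mem_mIdeal i
    · rw [spanl_nil]
      exact regseq_X d
  | succ t iht =>
    intro hts
    obtain ⟨gl, aux, hgl1, hgl2, hgl3, haux1, haux2, haux3⟩ := iht (by omega)
    match aux, haux1, haux2, haux3 with
    | [], haux1, _, _ => exfalso; simp at haux1; omega
    | b :: auxt, haux1, haux2, haux3 =>
    obtain ⟨g, hgΓ, hgreg⟩ := exists_gamma_regMod (r := r) Γ hΓ0 (spanl gl)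
      ⟨b, haux2 b (by simp), haux3.1⟩
    obtain ⟨k, hk1, hk2, hk3⟩ := dl_lemma (mIdeal_isMaximal d) (d - (t+1)) (spanl gl) g
      (b :: auxt) (by simp at haux1 ⊢; omega) haux2 hgreg haux3
    refine ⟨gl ++ [g], k, by simp [hgl1], ?_, ?_, by simp [hk1], hk2, ?_⟩
    · intro x hx
      rcases List.mem_append.mp hx with hx | hx
      · exact hgl2 x hx
      · rw [List.mem_singleton.mp hx]; exact hgΓ
    · exact hgl3.append_singleton (by rw [bot_sup_eq]; exact hgreg)
    · rw [spanl_append_singleton]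
      exact hk3.2

end Poly


open MvPolynomial

namespace Stmt9

variable {d : ℕ}

abbrev Poly (d : ℕ) := MvPolynomial (Fin d) ℂ

noncomputable def mulMap (q : Poly d) : Poly d →ₗ[ℂ] Poly d := LinearMap.mulLeft ℂ q

@[simp] theorem mulMap_apply (q x : Poly d) : mulMap q x = q * x := rfl

theorem map_mulMap_zero (p : Submodule ℂ (Poly d)) :
    Submodule.map (mulMap (0 : Poly d)) p = ⊥ := by
  ext x
  simp only [Submodule.mem_map, mulMap_apply, zero_mul, Submodule.mem_bot]
  constructor
  · rintro ⟨y, _, rfl⟩; rfl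
  · rintro rfl; exact ⟨0, zero_mem _, rfl⟩

variable (g : Fin d → Poly d) (r : ℕ)

noncomputable def gz (k : ℕ) (i : Fin d) : Poly d := if (i : ℕ) < k then g i else 0

noncomputable def Jk (k : ℕ) : Ideal (Poly d) := Ideal.span (Set.range (gz g k))

noncomputable def Rn (d n : ℕ) : Submodule ℂ (Poly d) := homogeneousSubmodule (Fin d) ℂ n

noncomputable def Rlow (n : ℕ) : Submodule ℂ (Poly d) :=
  if r ≤ n then Rn d (n - r) else ⊥

noncomputable def Wk (k n : ℕ) : Submodule ℂ (Poly d) :=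
  ⨆ i : Fin d, Submodule.map (mulMap (gz g k i)) (Rlow r n)

variable {g} {r}

theorem gz_homog (hghom : ∀ i, (g i).IsHomogeneous r) (k : ℕ) (i : Fin d) :
    (gz g k i).IsHomogeneous r := by
  rw [gz]
  split
  · exact hghom i
  · exact isHomogeneous_zero _ _ _

theorem hc_mul_homog {q : Poly d} (hq : q.IsHomogeneous r) (c : Poly d) (n : ℕ) :
    homogeneousComponent n (c * q) =
      if r ≤ n then homogeneousComponent (n - r) c * q else 0 := by
  conv_lhs => rw [← sum_homogeneousComponent c, Finset.sum_mul, map_sum]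
  have hterm : ∀ j, homogeneousComponent n (homogeneousComponent j c * q)
      = if n = j + r then homogeneousComponent j c * q else 0 := by
    intro j
    apply homogeneousComponent_of_mem
    exact (homogeneousComponent_isHomogeneous j c).mul hq
  rw [Finset.sum_congr rfl (fun j _ => hterm j)]
  by_cases hrn : r ≤ n
  · rw [Finset.sum_congr rfl (fun j _ => if_congr (show (n = j + r) ↔ (j = n - r) by omega) rfl rfl)]
    rw [Finset.sum_ite_eq' (Finset.range (c.totalDegree + 1)) (n - r)
      (fun j => homogeneousComponent j c * q)]
    rw [if_pos hrn]
    by_cases hmem : n - r ∈ Finset.range (c.totalDegree + 1)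
    · rw [if_pos hmem]
    · rw [if_neg hmem]
      have : c.totalDegree < n - r := by
        simp only [Finset.mem_range] at hmem; omega
      rw [homogeneousComponent_eq_zero _ _ this, zero_mul]
  · rw [if_neg hrn]
    apply Finset.sum_eq_zero
    intro j _
    rw [if_neg (by omega)]

theorem Jk_graded (hghom : ∀ i, (g i).IsHomogeneous r) {k n : ℕ} {p : Poly d}
    (hp : p ∈ Jk g k) (hph : p ∈ Rn d n) : p ∈ Wk g r k n := by
  obtain ⟨c, hc⟩ := Ideal.mem_span_range_iff_exists_fun.mp hp
  have hdecomp : p = ∑ i, homogeneousComponent n (c i * gz g k i) := by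
    have h1 : homogeneousComponent n p = p := by
      rw [homogeneousComponent_of_mem hph, if_pos rfl]
    rw [← h1, ← hc, map_sum]
  rw [hdecomp]
  apply Submodule.sum_mem
  intro i _
  rw [hc_mul_homog (gz_homog hghom k i) (c i) n]
  by_cases hrn : r ≤ n
  · rw [if_pos hrn, mul_comm]
    apply (le_iSup (fun i => Submodule.map (mulMap (gz g k i)) (Rlow r n)) i)
    refine ⟨homogeneousComponent (n - r) (c i), ?_, rfl⟩
    rw [Rlow, if_pos hrn]
    exact homogeneousComponent_mem (n - r) (c i)
  · rw [if_neg hrn]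
    exact zero_mem _

theorem Wk_le_Rn (hghom : ∀ i, (g i).IsHomogeneous r) (k n : ℕ) :
    Wk g r k n ≤ Rn d n := by
  apply iSup_le
  intro i
  rintro x ⟨q, hq, rfl⟩
  by_cases hrn : r ≤ n
  · rw [Rlow, if_pos hrn] at hq
    have hmul := (gz_homog hghom k i).mul (hq : (q : Poly d).IsHomogeneous (n - r))
    have harith : r + (n - r) = n := by omega
    rw [harith] at hmul
    exact hmul
  · rw [Rlow, if_neg hrn] at hq
    have hq0 : q = 0 := by simpa using hq
    subst hq0
    simp only [mulMap_apply, mul_zero]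
    exact zero_mem _

theorem Wk_le_Jk (k n : ℕ) {x : Poly d} (hx : x ∈ Wk g r k n) : x ∈ Jk g k := by
  have : Wk g r k n ≤ (Jk g k).restrictScalars ℂ := by
    apply iSup_le
    intro i
    rintro y ⟨q, _, rfl⟩
    simp only [Submodule.restrictScalars_mem, mulMap_apply]
    exact Ideal.mul_mem_right _ _ (Ideal.subset_span ⟨i, rfl⟩)
  exact this hx

theorem Wk_succ {k : ℕ} (hk : k < d) (n : ℕ) :
    Wk g r (k+1) n = Wk g r k n ⊔ Submodule.map (mulMap (g ⟨k, hk⟩)) (Rlow r n) := by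
  apply le_antisymm
  · apply iSup_le
    intro i
    rcases lt_trichotomy (i : ℕ) k with hik | hik | hik
    · have : gz g (k+1) i = gz g k i := by rw [gz, gz, if_pos (by omega), if_pos hik]
      rw [this]
      exact le_trans (le_iSup (fun j : Fin d =>
        Submodule.map (mulMap (gz g k j)) (Rlow r n)) i) le_sup_left
    · have hieq : i = ⟨k, hk⟩ := Fin.ext hik
      have : gz g (k+1) i = g ⟨k, hk⟩ := by rw [gz, if_pos (by omega), hieq]
      rw [this]
      exact le_sup_right
    · have : gz g (k+1) i = 0 := by rw [gz, if_neg (by omega)]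
      rw [this, map_mulMap_zero]
      exact bot_le
  · apply sup_le
    · apply iSup_le
      intro i
      by_cases hik : (i : ℕ) < k
      · have : gz g k i = gz g (k+1) i := by rw [gz, gz, if_pos hik, if_pos (by omega)]
        rw [this]
        exact le_iSup (fun j : Fin d =>
          Submodule.map (mulMap (gz g (k+1) j)) (Rlow r n)) i
      · have : gz g k i = 0 := by rw [gz, if_neg hik]
        rw [this, map_mulMap_zero]
        exact bot_le
    · have : g ⟨k, hk⟩ = gz g (k+1) ⟨k, hk⟩ := by rw [gz, if_pos (by simp)]
      rw [this]
      exact le_iSup (fun j : Fin d =>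
        Submodule.map (mulMap (gz g (k+1) j)) (Rlow r n)) ⟨k, hk⟩

theorem map_Rlow_le (hghom : ∀ i, (g i).IsHomogeneous r) {n : ℕ} (hrn : r ≤ n) (q : Poly d)
    (hq : q.IsHomogeneous r) :
    Submodule.map (mulMap q) (Rlow r (n - r)) ≤ (Rlow r n : Submodule ℂ (Poly d)) := by
  by_cases hrn2 : r ≤ n - r
  · rintro x ⟨y, hy, rfl⟩
    rw [Rlow, if_pos hrn2] at hy
    rw [Rlow, if_pos hrn]
    have hmul := hq.mul (hy : (y : Poly d).IsHomogeneous (n - r - r))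
    have harith : r + (n - r - r) = n - r := by omega
    rw [harith] at hmul
    exact hmul
  · rw [Rlow, if_neg hrn2, Submodule.map_bot]
    exact bot_le


theorem map_Rlow_le_Rn {q : Poly d} (hq : q.IsHomogeneous r) (n : ℕ) :
    Submodule.map (mulMap q) (Rlow r n) ≤ Rn d n := by
  rintro x ⟨y, hy, rfl⟩
  by_cases hrn : r ≤ n
  · rw [Rlow, if_pos hrn] at hy
    have hmul := hq.mul (hy : (y : Poly d).IsHomogeneous (n - r))
    have harith : r + (n - r) = n := by omega
    rw [harith] at hmul
    exact hmul
  · rw [Rlow, if_neg hrn] at hy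
    have hy0 : y = 0 := by simpa using hy
    subst hy0
    simp only [mulMap_apply, mul_zero]
    exact zero_mem _

theorem Wk_inter (hghom : ∀ i, (g i).IsHomogeneous r) {k : ℕ} (hk : k < d)
    (hreg : RegMod (g ⟨k, hk⟩) (Jk g k)) {n : ℕ} (hrn : r ≤ n) :
    Wk g r k n ⊓ Submodule.map (mulMap (g ⟨k, hk⟩)) (Rlow r n)
      = Submodule.map (mulMap (g ⟨k, hk⟩)) (Wk g r k (n - r)) := by
  apply le_antisymm
  · rintro x ⟨hxW, q, hq, rfl⟩
    have hqJ : q ∈ Jk g k := hreg q (Wk_le_Jk k n hxW)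
    rw [Rlow, if_pos hrn] at hq
    exact ⟨q, Jk_graded hghom hqJ hq, rfl⟩
  · apply le_inf
    · rintro x ⟨w, hw, rfl⟩
      refine Submodule.iSup_induction'
        (p := fun i : Fin d => Submodule.map (mulMap (gz g k i)) (Rlow r (n - r)))
        (motive := fun w _ => (mulMap (g ⟨k, hk⟩)) w ∈ Wk g r k n) ?_ ?_ ?_ hw
      · rintro i y ⟨z, hz, rfl⟩
        show (mulMap (g ⟨k, hk⟩)) ((mulMap (gz g k i)) z) ∈ Wk g r k n
        have hgkz : g ⟨k, hk⟩ * z ∈ Rlow r n := by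
          apply map_Rlow_le (hghom := hghom) hrn (g ⟨k, hk⟩) (hghom _)
          exact ⟨z, hz, rfl⟩
        have heq : (mulMap (g ⟨k, hk⟩)) ((mulMap (gz g k i)) z)
            = (mulMap (gz g k i)) (g ⟨k, hk⟩ * z) := by
          simp only [mulMap_apply]
          ring
        rw [heq]
        apply (le_iSup (fun j : Fin d =>
          Submodule.map (mulMap (gz g k j)) (Rlow r n)) i)
        exact ⟨g ⟨k, hk⟩ * z, hgkz, rfl⟩
      · show (mulMap (g ⟨k, hk⟩)) (0 : Poly d) ∈ Wk g r k n
        rw [map_zero]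
        exact zero_mem _
      · intro a b _ _ ha hb
        show (mulMap (g ⟨k, hk⟩)) (a + b) ∈ Wk g r k n
        rw [map_add]
        exact add_mem ha hb
    · rintro x ⟨w, hw, rfl⟩
      refine ⟨w, ?_, rfl⟩
      rw [Rlow, if_pos hrn]
      exact Wk_le_Rn hghom k (n - r) hw

noncomputable def degSet (d n : ℕ) : Finset ((Fin d) →₀ ℕ) :=
  Finset.finsuppAntidiag Finset.univ n

theorem mem_degSet {n : ℕ} {f : (Fin d) →₀ ℕ} : f ∈ degSet d n ↔ f.degree = n := by
  rw [degSet, Finset.mem_finsuppAntidiag]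
  have hsum : Finset.univ.sum f = f.degree :=
    (Finset.sum_subset (Finset.subset_univ f.support)
      (fun x _ hx => Finsupp.notMem_support_iff.mp hx)).symm
  constructor
  · rintro ⟨h1, _⟩; rw [← hsum]; exact h1
  · intro h; exact ⟨by rw [hsum]; exact h, Finset.subset_univ _⟩

theorem Rn_eq_restrict (n : ℕ) :
    Rn d n = restrictSupport ℂ (↑(degSet d n) : Set ((Fin d) →₀ ℕ)) := by
  rw [Rn, homogeneousSubmodule_eq_finsupp_supported]
  have : {m : (Fin d) →₀ ℕ | m.degree = n} = ↑(degSet d n) := by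
    ext m; simp [mem_degSet]
  rw [this]
  rfl

theorem fin_Rn (n : ℕ) : FiniteDimensional ℂ (Rn d n) := by
  rw [Rn_eq_restrict]
  exact Module.Finite.of_basis (basisRestrictSupport ℂ _)

theorem finrank_Rn (n : ℕ) : Module.finrank ℂ (Rn d n) = (degSet d n).card := by
  rw [Rn_eq_restrict]
  rw [Module.finrank_eq_card_basis (basisRestrictSupport ℂ _)]
  simp

theorem finrank_eq_of_map {q : Poly d} (hq : q ≠ 0) (p : Submodule ℂ (Poly d)) :
    Module.finrank ℂ (Submodule.map (mulMap q) p) = Module.finrank ℂ p := by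
  have hinj : Function.Injective (mulMap (d := d) q) := by
    intro a b hab
    simp only [mulMap_apply] at hab
    exact mul_left_cancel₀ hq hab
  exact (LinearEquiv.finrank_eq (Submodule.equivMapOfInjective _ hinj p)).symm

theorem W_rec (hghom : ∀ i, (g i).IsHomogeneous r) (hg0 : ∀ i, g i ≠ 0) {k : ℕ} (hk : k < d)
    (hreg : RegMod (g ⟨k, hk⟩) (Jk g k)) {n : ℕ} (hrn : r ≤ n) :
    Module.finrank ℂ (Wk g r (k+1) n) + Module.finrank ℂ (Wk g r k (n - r))
      = Module.finrank ℂ (Wk g r k n) + Module.finrank ℂ (Rn d (n - r)) := by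
  haveI fR : FiniteDimensional ℂ (Rn d n) := fin_Rn n
  haveI fW : FiniteDimensional ℂ (Wk g r k n) :=
    Submodule.finiteDimensional_of_le (Wk_le_Rn hghom k n)
  haveI fB : FiniteDimensional ℂ
      (Submodule.map (mulMap (g ⟨k, hk⟩)) (Rlow r n)) :=
    Submodule.finiteDimensional_of_le (map_Rlow_le_Rn (hghom _) n)
  have h1 := Submodule.finrank_sup_add_finrank_inf_eq (Wk g r k n)
    (Submodule.map (mulMap (g ⟨k, hk⟩)) (Rlow r n))
  rw [Wk_inter hghom hk hreg hrn] at h1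
  rw [← Wk_succ hk n] at h1
  rw [finrank_eq_of_map (hg0 _) (Wk g r k (n - r))] at h1
  rw [finrank_eq_of_map (hg0 _) (Rlow r n)] at h1
  rw [show (Rlow r n : Submodule ℂ (Poly d)) = Rn d (n - r) from by
    rw [Rlow, if_pos hrn]] at h1
  omega

noncomputable def uSet (d r k n : ℕ) : Finset ((Fin d) →₀ ℕ) :=
  (degSet d n).filter (fun f => ∀ i : Fin d, (i : ℕ) < k → f i < r)

theorem uSet_zero (d r n : ℕ) : uSet d r 0 n = degSet d n := by
  rw [uSet]
  apply Finset.filter_true_of_mem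
  intro f _ i hi
  omega

theorem uSet_small {d r k n : ℕ} (hn : n < r) : uSet d r k n = degSet d n := by
  rw [uSet]
  apply Finset.filter_true_of_mem
  intro f hf i _
  have h1 : f i ≤ f.degree := Finsupp.le_degree i f
  rw [mem_degSet.mp hf] at h1
  omega

theorem uSet_top {d r n : ℕ} (hn : (r-1) * d < n) : uSet d r d n = ∅ := by
  rw [Finset.eq_empty_iff_forall_notMem]
  intro f hf
  rw [uSet, Finset.mem_filter] at hf
  obtain ⟨hfd, hfb⟩ := hf
  have hdeg : f.degree ≤ (r-1) * d := by
    rw [Finsupp.degree]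
    calc ∑ i ∈ f.support, f i ≤ ∑ i ∈ (Finset.univ : Finset (Fin d)), f i :=
        Finset.sum_le_sum_of_subset (Finset.subset_univ _)
      _ ≤ ∑ _i ∈ (Finset.univ : Finset (Fin d)), (r-1) := by
        apply Finset.sum_le_sum
        intro i _
        have := hfb i i.isLt
        omega
      _ = (r-1) * d := by simp [Finset.sum_const, Finset.card_univ, mul_comm]
  rw [mem_degSet.mp hfd] at hdeg
  omega

theorem degree_add' (a b : (Fin d) →₀ ℕ) : (a + b).degree = a.degree + b.degree := by
  simp [Finsupp.degree_eq_weight_one, map_add]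

theorem degree_single' (i : Fin d) (m : ℕ) : (Finsupp.single i m).degree = m := by
  by_cases hm : m = 0
  · subst hm; simp [Finsupp.degree]
  · exact Finsupp.degree_single i m

theorem uSet_rec {d r k n : ℕ} (hk : k < d) (hrn : r ≤ n) :
    (uSet d r k n).card = (uSet d r (k+1) n).card + (uSet d r k (n - r)).card := by
  classical
  set kk : Fin d := ⟨k, hk⟩ with hkk
  have hsplit := Finset.card_filter_add_card_filter_not
    (s := uSet d r k n) (p := fun f => f kk < r)
  have h1 : (uSet d r k n).filter (fun f => f kk < r) = uSet d r (k+1) n := by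
    rw [uSet, uSet, Finset.filter_filter]
    apply Finset.filter_congr
    intro f _
    constructor
    · rintro ⟨hb, hkkr⟩ i hi
      rcases Nat.lt_or_ge (i : ℕ) k with h | h
      · exact hb i h
      · have hik : (i : ℕ) = k := by omega
        have : i = kk := Fin.ext hik
        rw [this]
        exact hkkr
    · intro hb
      refine ⟨fun i hi => hb i (by omega), hb kk (by rw [hkk]; simp)⟩
  have h2 : ((uSet d r k n).filter (fun f => ¬ f kk < r)).card = (uSet d r k (n-r)).card := by
    have cancel1 : ∀ f : (Fin d) →₀ ℕ, r ≤ f kk → (f - Finsupp.single kk r) + Finsupp.single kk r = f := by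
      intro f hf
      ext i
      by_cases hik : i = kk
      · subst hik
        simp only [Finsupp.add_apply, Finsupp.tsub_apply, Finsupp.single_eq_same]
        omega
      · simp [Finsupp.single_eq_of_ne hik, Finsupp.tsub_apply]
    have cancel2 : ∀ f : (Fin d) →₀ ℕ, (f + Finsupp.single kk r) - Finsupp.single kk r = f := by
      intro f
      ext i
      by_cases hik : i = kk
      · subst hik
        simp only [Finsupp.add_apply, Finsupp.tsub_apply, Finsupp.single_eq_same]
        omega
      · simp [Finsupp.single_eq_of_ne hik, Finsupp.tsub_apply]
    apply Finset.card_bij' (i := fun f _ => f - Finsupp.single kk r)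
      (j := fun f _ => f + Finsupp.single kk r)
    · intro f hf
      rw [Finset.mem_filter, uSet, Finset.mem_filter] at hf
      obtain ⟨⟨hfd, hfb⟩, hfr⟩ := hf
      have hfr' : r ≤ f kk := by omega
      rw [uSet, Finset.mem_filter]
      constructor
      · rw [mem_degSet]
        have hd1 : (f - Finsupp.single kk r).degree + r = n := by
          have := congrArg Finsupp.degree (cancel1 f hfr')
          rw [degree_add', degree_single'] at this
          rw [← mem_degSet.mp hfd]
          exact this
        omega
      · intro i hi
        have hik : i ≠ kk := by
          intro h
          rw [h, hkk] at hi
          simp at hi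
        have : (f - Finsupp.single kk r) i = f i := by
          simp [Finsupp.tsub_apply, Finsupp.single_eq_of_ne hik]
        rw [this]
        exact hfb i hi
    · intro f hf
      rw [uSet, Finset.mem_filter] at hf
      obtain ⟨hfd, hfb⟩ := hf
      rw [Finset.mem_filter, uSet, Finset.mem_filter]
      refine ⟨⟨?_, ?_⟩, ?_⟩
      · rw [mem_degSet, degree_add', degree_single', mem_degSet.mp hfd]
        omega
      · intro i hi
        have hik : i ≠ kk := by
          intro h
          rw [h, hkk] at hi
          simp at hi
        have : (f + Finsupp.single kk r) i = f i := by
          simp [Finsupp.single_eq_of_ne hik]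
        rw [this]
        exact hfb i hi
      · simp only [Finsupp.add_apply, Finsupp.single_eq_same]
        omega
    · intro f hf
      rw [Finset.mem_filter] at hf
      exact cancel1 f (by omega)
    · intro f _
      exact cancel2 f
  rw [h1] at hsplit
  omega

theorem Wk_bot {k n : ℕ} (hn : n < r) : Wk g r k n = (⊥ : Submodule ℂ (Poly d)) := by
  apply le_antisymm ?_ bot_le
  apply iSup_le
  intro i
  rw [show Rlow r n = (⊥ : Submodule ℂ (Poly d)) from by rw [Rlow, if_neg (by omega)]]
  rw [Submodule.map_bot]

theorem Wk_zero_eq_bot (n : ℕ) : Wk g r 0 n = (⊥ : Submodule ℂ (Poly d)) := by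
  apply le_antisymm ?_ bot_le
  apply iSup_le
  intro i
  rw [show gz g 0 i = 0 from by rw [gz, if_neg (by omega)], map_mulMap_zero]

theorem W_count (hghom : ∀ i, (g i).IsHomogeneous r) (hg0 : ∀ i, g i ≠ 0)
    (hreg : ∀ (k : ℕ) (hk : k < d), RegMod (g ⟨k, hk⟩) (Jk g k)) :
    ∀ k, k ≤ d → ∀ n, Module.finrank ℂ (Wk g r k n) + (uSet d r k n).card
      = (degSet d n).card := by
  intro k
  induction k with
  | zero =>
    intro _ n
    rw [Wk_zero_eq_bot, uSet_zero]
    simp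
  | succ k ih =>
    intro hk1 n
    have hk : k < d := by omega
    by_cases hrn : r ≤ n
    · have hrec := W_rec hghom hg0 hk (hreg k hk) hrn
      have h1 := ih (by omega) n
      have h2 := ih (by omega) (n - r)
      have h3 := uSet_rec (r := r) hk hrn
      have h4 := finrank_Rn (d := d) (n - r)
      omega
    · rw [Wk_bot (by omega), uSet_small (by omega)]
      simp

theorem Rn_eq_W (hghom : ∀ i, (g i).IsHomogeneous r) (hg0 : ∀ i, g i ≠ 0)
    (hreg : ∀ (k : ℕ) (hk : k < d), RegMod (g ⟨k, hk⟩) (Jk g k))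
    {n : ℕ} (hn : (r-1)*d < n) :
    Rn d n = Wk g r d n := by
  have hcw := W_count hghom hg0 hreg d le_rfl n
  rw [uSet_top hn] at hcw
  simp only [Finset.card_empty, add_zero] at hcw
  have hle : Wk g r d n ≤ Rn d n := Wk_le_Rn hghom d n
  haveI := fin_Rn (d := d) n
  exact (Submodule.eq_of_le_of_finrank_le hle (by rw [finrank_Rn]; omega)).symm

end Stmt9


open MvPolynomial



open Stmt9

theorem list_take_span_eq_Jk {d : ℕ} (gl : List (Rd d)) (hlen : gl.length = d)
    (g : Fin d → Rd d) (hg : ∀ i : Fin d, g i = gl.get ⟨i.val, by rw [hlen]; exact i.isLt⟩)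
    (k : ℕ) : spanl (gl.take k) = Jk g k := by
  apply le_antisymm
  · rw [spanl, Ideal.span_le]
    intro x hx
    obtain ⟨i, hi, hix⟩ := List.mem_iff_getElem.mp hx
    have hilen : i < gl.length := by
      rw [List.length_take] at hi
      omega
    have hik : i < k := by
      rw [List.length_take] at hi
      omega
    have hid : i < d := by omega
    have : x = gz g k ⟨i, hid⟩ := by
      rw [gz, if_pos hik, hg ⟨i, hid⟩]
      rw [← hix]
      simp [List.getElem_take]
    rw [this]
    exact Ideal.subset_span ⟨⟨i, hid⟩, rfl⟩
  · rw [Jk, Ideal.span_le]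
    rintro x ⟨i, rfl⟩
    by_cases hik : (i : ℕ) < k
    · rw [gz, if_pos hik, hg i]
      apply Ideal.subset_span
      show _ ∈ {x | x ∈ gl.take k}
      rw [Set.mem_setOf_eq, List.mem_iff_getElem]
      refine ⟨i.val, ?_, ?_⟩
      · rw [List.length_take]
        omega
      · rw [List.getElem_take]
        simp
    · rw [gz, if_neg hik]
      exact zero_mem _

/-- if the subspace `Γ ⊆ R_r` has `0` as its only common zero, then
`R = ℂ[x_1,…,x_d]` is generated as a module over `Algebra.adjoin ℂ Γ` by the
polynomials of degree at most `(r−1)·d`; in particular `R` is a finitely generated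
`Algebra.adjoin ℂ Γ`-module. -/
theorem statement9 (d r : ℕ) (hd : 1 ≤ d) (hr : 1 ≤ r)
    (Γ : Submodule ℂ (MvPolynomial (Fin d) ℂ))
    (hΓ : Γ ≤ homogeneousSubmodule (Fin d) ℂ r)
    (hΓ0 : ∀ x : Fin d → ℂ, (∀ g ∈ Γ, eval x g = 0) → x = 0) :
    Submodule.span (Algebra.adjoin ℂ (Γ : Set (MvPolynomial (Fin d) ℂ)))
        {p : MvPolynomial (Fin d) ℂ | p.totalDegree ≤ (r - 1) * d} = ⊤ ∧
    Module.Finite (Algebra.adjoin ℂ (Γ : Set (MvPolynomial (Fin d) ℂ)))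
      (MvPolynomial (Fin d) ℂ) := by
  classical
  obtain ⟨gl, hlen, hglΓ, hglseq⟩ := exists_regseq_gamma (r := r) hd hr Γ hΓ0
  set A := Algebra.adjoin ℂ (Γ : Set (MvPolynomial (Fin d) ℂ)) with hA
  set S : Submodule A (MvPolynomial (Fin d) ℂ) :=
    Submodule.span A {p : MvPolynomial (Fin d) ℂ | p.totalDegree ≤ (r - 1) * d} with hS
  set g : Fin d → Rd d := fun i => gl.get ⟨i.val, by rw [hlen]; exact i.isLt⟩ with hgdef
  have hgΓ : ∀ i, g i ∈ Γ := fun i => hglΓ _ (List.get_mem _ _)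
  have hghom : ∀ i, (g i).IsHomogeneous r := fun i => hΓ (hgΓ i)
  have hJk_eq : ∀ k : ℕ, spanl (gl.take k) = Jk g k :=
    list_take_span_eq_Jk gl hlen g (fun i => rfl)
  have hreg : ∀ (k : ℕ) (hk : k < d), RegMod (g ⟨k, hk⟩) (Jk g k) := by
    intro k hk
    have h := hglseq.tail_ideal k (by rw [hlen]; exact hk)
    rw [bot_sup_eq, hJk_eq k] at h
    exact h
  have hJle : ∀ k : ℕ, Jk g k ≤ mIdeal d := by
    intro k
    rw [Jk, Ideal.span_le]
    rintro x ⟨i, rfl⟩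
    rw [gz]
    split
    · exact homog_mem_mIdeal hr (hghom i)
    · exact zero_mem _
  have hg0 : ∀ i : Fin d, g i ≠ 0 := by
    intro i h0
    have hri : RegMod (g ⟨(i : ℕ), i.isLt⟩) (Jk g i) := hreg i i.isLt
    rw [Fin.eta] at hri
    have h1 : (1 : Rd d) ∈ Jk g i := by
      apply hri
      rw [h0, zero_mul]
      exact zero_mem _
    exact (mIdeal_isMaximal d).ne_top ((Ideal.eq_top_iff_one _).mpr (hJle _ h1))
  -- the key claim
  have key : ∀ n : ℕ, ∀ p, p ∈ Stmt9.Rn d n → p ∈ S := by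
    intro n
    induction n using Nat.strong_induction_on with
    | _ n ih =>
      intro p hp
      by_cases hnB : n ≤ (r - 1) * d
      · apply Submodule.subset_span
        exact le_trans (IsHomogeneous.totalDegree_le hp) hnB
      · have hrd : (r - 1) * 1 ≤ (r - 1) * d := Nat.mul_le_mul_left _ hd
        have hrn : r ≤ n := by omega
        rw [Rn_eq_W hghom hg0 hreg (by omega)] at hp
        refine Submodule.iSup_induction'
          (p := fun i : Fin d => Submodule.map (mulMap (gz g d i)) (Rlow r n))
          (motive := fun x _ => x ∈ S) ?_ ?_ ?_ hp
        · rintro i x ⟨q, hq, rfl⟩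
          show mulMap (gz g d i) q ∈ S
          have hgz : gz g d i = g i := by rw [gz, if_pos i.isLt]
          rw [mulMap_apply, hgz]
          rw [Rlow, if_pos hrn] at hq
          have hqS : q ∈ S := ih (n - r) (by omega) q hq
          have hsm := Submodule.smul_mem S
            (⟨g i, Algebra.subset_adjoin (hgΓ i)⟩ : A) hqS
          have : (⟨g i, Algebra.subset_adjoin (hgΓ i)⟩ : A) • q = g i * q := rfl
          rwa [this] at hsm
        · show (0 : MvPolynomial (Fin d) ℂ) ∈ S
          exact zero_mem S
        · intro a b _ _ ha hb
          show a + b ∈ S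
          exact add_mem ha hb
  have hspan : S = ⊤ := by
    rw [eq_top_iff]
    intro p _
    rw [← sum_homogeneousComponent p]
    apply Submodule.sum_mem
    intro i _
    exact key i _ (homogeneousComponent_mem i p)
  refine ⟨hspan, ?_⟩
  -- finiteness
  set T : Finset (MvPolynomial (Fin d) ℂ) := (Finset.range ((r - 1) * d + 1)).biUnion
    (fun n => (Stmt9.degSet d n).image (fun m => monomial m (1 : ℂ))) with hT
  refine ⟨⟨T, ?_⟩⟩
  rw [eq_top_iff, ← hspan, hS]
  rw [Submodule.span_le]
  intro p hp
  rw [Set.mem_setOf_eq] at hp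
  show p ∈ Submodule.span A (T : Set (MvPolynomial (Fin d) ℂ))
  rw [MvPolynomial.as_sum p]
  apply Submodule.sum_mem
  intro v hv
  have hmono : monomial v (1 : ℂ) ∈ (T : Set (MvPolynomial (Fin d) ℂ)) := by
    rw [hT]
    simp only [Finset.coe_biUnion, Finset.mem_coe, Set.mem_iUnion]
    refine ⟨v.degree, ?_, ?_⟩
    · rw [Finset.mem_range]
      have hdeg : v.degree ≤ p.totalDegree := by
        rw [Finsupp.degree]
        exact le_totalDegree hv
      omega
    · rw [Finset.mem_image]
      exact ⟨v, mem_degSet.mpr rfl, rfl⟩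
  have : monomial v (coeff v p) = (coeff v p) • monomial v (1 : ℂ) := by
    rw [smul_monomial, smul_eq_mul, mul_one]
  rw [this, ← algebraMap_smul A (coeff v p) (monomial v (1 : ℂ))]
  exact Submodule.smul_mem _ _ (Submodule.subset_span hmono)
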